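/- Define x(t) = 2cos(2t), y(t) = -2sin(2t), and z(t) = 4t + sin(4t) + c₁ for a constant c₁, and set λ = 1, c = 2. Then x² + y² = 4 identically, and z'(t) + x(t)·y'(t) = -x(t)²/2 - y(t)²/2 + 2 for all t. -/

import Mathlib

theorem stmt_12 (c1 : ℝ) (x y z : ℝ → ℝ)
    (hx : ∀ t, x t = 2 * Real.cos (2 * t))
    (hy : ∀ t, y t = -2 * Real.sin (2 * t))
    (hz : ∀ t, z t = 4 * t + Real.sin (4 * t) + c1) :
    ∀ t, (x t) ^ 2 + (y t) ^ 2 = 4 ∧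
      deriv z t + x t * deriv y t = -(x t) ^ 2 / 2 - (y t) ^ 2 / 2 + 2 := by
  intro t
  have hxe : x = fun t => 2 * Real.cos (2 * t) := funext hx
  have hye : y = fun t => -2 * Real.sin (2 * t) := funext hy
  have hze : z = fun t => 4 * t + Real.sin (4 * t) + c1 := funext hz
  subst hxe hye hze
  have hdy : deriv (fun t => -2 * Real.sin (2 * t)) t = -4 * Real.cos (2 * t) := by
    have : HasDerivAt (fun t => -2 * Real.sin (2 * t)) (-4 * Real.cos (2 * t)) t := by
      have h := ((Real.hasDerivAt_sin (2 * t)).comp t ((hasDerivAt_id t).const_mul 2)).const_mul (-2 : ℝ)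
      exact h.congr_deriv (by ring)
    exact this.deriv
  have hdz : deriv (fun t => 4 * t + Real.sin (4 * t) + c1) t = 4 + 4 * Real.cos (4 * t) := by
    have : HasDerivAt (fun t => 4 * t + Real.sin (4 * t) + c1) (4 + 4 * Real.cos (4 * t)) t := by
      have h1 := (hasDerivAt_id t).const_mul (4 : ℝ)
      have h2 := (Real.hasDerivAt_sin (4 * t)).comp t ((hasDerivAt_id t).const_mul 4)
      have := ((h1.add h2).add_const c1)
      exact this.congr_deriv (by ring)
    exact this.deriv
  constructor
  · simp only []
    nlinarith [Real.sin_sq_add_cos_sq (2 * t)]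
  · rw [hdy, hdz]
    have h4 : Real.cos (4 * t) = 1 - 2 * Real.sin (2 * t) ^ 2 := by
      rw [show (4:ℝ) * t = 2 * (2 * t) by ring, Real.cos_two_mul']
      nlinarith [Real.sin_sq_add_cos_sq (2 * t)]
    simp only []
    nlinarith [Real.sin_sq_add_cos_sq (2 * t)]
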